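/- For all fixed integers r ≥ 2 and e ≥ 2, and all sufficiently large n (as a function of r and e), f_r(n, er-(e-1), e) < n/(r-1), where f_r(n, v, e) is the maximum number of edges in an n-vertex r-uniform hypergraph in which any e distinct edges have union of size at least v+1. -/

import Mathlib

open Finset

/-- `F` is an `r`-uniform hypergraph: every edge has `r` vertices. -/
def UniformH {n : ℕ} (r : ℕ) (F : Finset (Finset (Fin n))) : Prop :=
  ∀ A ∈ F, A.card = r

/-- `F` is `G_r(v,e)`-free: any `e` distinct edges have union of size at least `v+1`. -/
def IsGFree {n : ℕ} (v e : ℕ) (F : Finset (Finset (Fin n))) : Prop :=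
  ∀ S ⊆ F, S.card = e → v + 1 ≤ (S.biUnion id).card

/-- `f_r(n,v,e)`: the maximum number of edges of an `n`-vertex `G_r(v,e)`-free
`r`-uniform hypergraph. -/
noncomputable def extremalF (r n v e : ℕ) : ℕ :=
  sSup {m | ∃ F : Finset (Finset (Fin n)), UniformH r F ∧ IsGFree v e F ∧ F.card = m}

namespace Stmt8Aux
variable {n : ℕ}

def LU (l : List (Finset (Fin n))) : Finset (Fin n) := l.foldr (· ∪ ·) ∅

lemma LU_cons (A : Finset (Fin n)) (l : List (Finset (Fin n))) :
    LU (A :: l) = A ∪ LU l := rfl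

lemma mem_LU {x : Fin n} {l : List (Finset (Fin n))} : x ∈ LU l ↔ ∃ D ∈ l, x ∈ D := by
  induction l with
  | nil => simp [LU]
  | cons A l ih => rw [LU_cons]; simp [ih]

def AdjF (F : Finset (Finset (Fin n))) (A B : Finset (Fin n)) : Prop :=
  A ∈ F ∧ B ∈ F ∧ A ≠ B ∧ (A ∩ B).Nonempty

def ReachF (F : Finset (Finset (Fin n))) (A B : Finset (Fin n)) : Prop :=
  Relation.ReflTransGen (AdjF F) A B

lemma adjF_symm {F : Finset (Finset (Fin n))} : Symmetric (AdjF F) := by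
  rintro A B ⟨h1, h2, h3, h4⟩
  exact ⟨h2, h1, h3.symm, by rwa [Finset.inter_comm]⟩

lemma reachF_symm {F : Finset (Finset (Fin n))} {A B : Finset (Fin n)}
    (h : ReachF F A B) : ReachF F B A :=
  (@Relation.ReflTransGen.stdSymm _ _ ⟨fun a b h => adjF_symm h⟩).symm _ _ h

lemma reachF_trans {F : Finset (Finset (Fin n))} {A B C : Finset (Fin n)}
    (h1 : ReachF F A B) (h2 : ReachF F B C) : ReachF F A C :=
  Relation.ReflTransGen.trans h1 h2

noncomputable def compF (F : Finset (Finset (Fin n))) (A : Finset (Fin n)) :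
    Finset (Finset (Fin n)) :=
  @Finset.filter _ (fun B => ReachF F A B) (Classical.decPred _) F

lemma mem_compF {F : Finset (Finset (Fin n))} {A B : Finset (Fin n)} :
    B ∈ compF F A ↔ B ∈ F ∧ ReachF F A B :=
  @Finset.mem_filter _ (fun B => ReachF F A B) (Classical.decPred _) F B

lemma compF_subset (F : Finset (Finset (Fin n))) (A : Finset (Fin n)) :
    compF F A ⊆ F := fun B hB => (mem_compF.mp hB).1

lemma self_mem_compF {F : Finset (Finset (Fin n))} {A : Finset (Fin n)} (hA : A ∈ F) :
    A ∈ compF F A := mem_compF.mpr ⟨hA, Relation.ReflTransGen.refl⟩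

lemma compF_eq_of_reach {F : Finset (Finset (Fin n))} {A B : Finset (Fin n)}
    (h : ReachF F A B) : compF F A = compF F B := by
  ext X
  simp only [mem_compF]
  constructor
  · rintro ⟨hX, hR⟩; exact ⟨hX, reachF_trans (reachF_symm h) hR⟩
  · rintro ⟨hX, hR⟩; exact ⟨hX, reachF_trans h hR⟩

lemma compF_disjoint {F : Finset (Finset (Fin n))} {A B : Finset (Fin n)}
    (h : compF F A ≠ compF F B) : Disjoint (compF F A) (compF F B) := by
  rw [Finset.disjoint_left]
  intro X hX hX'
  exact h ((compF_eq_of_reach (mem_compF.mp hX).2).trans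
    (compF_eq_of_reach (mem_compF.mp hX').2).symm)

lemma exists_extend {F : Finset (Finset (Fin n))} {A B : Finset (Fin n)}
    (hR : ReachF F A B) :
    ∀ l : List (Finset (Fin n)), A ∈ l → B ∉ l →
      ∃ C, C ∈ F ∧ C ∉ l ∧ (C ∩ LU l).Nonempty ∧ ReachF F A C := by
  induction hR with
  | refl => intro l hA hB; exact absurd hA hB
  | @tail b c h hadj ih =>
    intro l hA hC
    by_cases hb : b ∈ l
    · refine ⟨c, hadj.2.1, hC, ?_, Relation.ReflTransGen.tail h hadj⟩
      obtain ⟨x, hx⟩ := hadj.2.2.2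
      rw [Finset.mem_inter] at hx
      exact ⟨x, Finset.mem_inter.mpr ⟨hx.2, mem_LU.mpr ⟨b, hb, hx.1⟩⟩⟩
    · exact ih l hA hb

/-- A list of edges each (after the first) intersecting the union of the later ones. -/
def GoodL : List (Finset (Fin n)) → Prop
  | [] => True
  | A :: l => GoodL l ∧ (l = [] ∨ (A ∩ LU l).Nonempty)

lemma card_LU (r : ℕ) (hr : 1 ≤ r) :
    ∀ l : List (Finset (Fin n)), GoodL l → (∀ A ∈ l, A.card = r) → l ≠ [] →
      (LU l).card ≤ l.length * (r - 1) + 1 := by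
  intro l
  induction l with
  | nil => intro _ _ h; exact absurd rfl h
  | cons A l ih =>
    intro hg hc _
    rcases hg with ⟨hgl, hor⟩
    rcases hor with hnil | hint
    · subst hnil
      have h1 : LU [A] = A := by simp [LU]
      rw [h1]
      have : A.card = r := hc A (by simp)
      simp only [List.length_cons, List.length_nil]
      omega
    · have hnil : l ≠ [] := by rintro rfl; simp [LU] at hint
      have hU : (LU l).card ≤ l.length * (r - 1) + 1 :=
        ih hgl (fun B hB => hc B (by simp [hB])) hnil
      have hsum := Finset.card_union_add_card_inter A (LU l)
      have hint1 : 1 ≤ (A ∩ LU l).card := Finset.card_pos.mpr hint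
      have hA : A.card = r := hc A (by simp)
      rw [LU_cons]
      simp only [List.length_cons]
      have hmul : (l.length + 1) * (r - 1) = l.length * (r - 1) + (r - 1) := by
        rw [Nat.succ_mul]
      rw [hmul]
      omega



lemma build {F : Finset (Finset (Fin n))} {A : Finset (Fin n)} (hA : A ∈ F) :
    ∀ k : ℕ, 1 ≤ k → k ≤ (compF F A).card →
      ∃ l : List (Finset (Fin n)), GoodL l ∧ l.Nodup ∧ l.length = k ∧ l ≠ [] ∧
        ∀ B ∈ l, B ∈ compF F A := by
  intro k
  induction k with
  | zero => intro h; omega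
  | succ k ih =>
    intro _ hk
    by_cases hk1 : k = 0
    · subst hk1
      refine ⟨[A], ⟨trivial, Or.inl rfl⟩, by simp, rfl, by simp, ?_⟩
      intro B hB
      simp only [List.mem_singleton] at hB
      subst hB
      exact self_mem_compF hA
    · obtain ⟨l, hg, hnd, hlen, hne, hmem⟩ := ih (by omega) (by omega)
      have hsub : l.toFinset ⊆ compF F A := fun B hB => hmem B (List.mem_toFinset.mp hB)
      have hcard : l.toFinset.card = k := by
        rw [List.toFinset_card_of_nodup hnd, hlen]
      have hex : ∃ B ∈ compF F A, B ∉ l.toFinset := by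
        by_contra hcon
        push_neg at hcon
        have : (compF F A).card ≤ k := hcard ▸ Finset.card_le_card hcon
        omega
      obtain ⟨B, hBcomp, hBl⟩ := hex
      obtain ⟨D, l', rfl⟩ := List.exists_cons_of_ne_nil hne
      have hD : D ∈ compF F A := hmem D (by simp)
      have hRDB : ReachF F D B :=
        reachF_trans (reachF_symm (mem_compF.mp hD).2) (mem_compF.mp hBcomp).2
      have hBl' : B ∉ D :: l' := fun h => hBl (List.mem_toFinset.mpr h)
      obtain ⟨C, hCF, hCl, hCint, hRDC⟩ := exists_extend hRDB (D :: l') (by simp) hBl'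
      refine ⟨C :: D :: l', ⟨hg, Or.inr hCint⟩, ?_, by simpa using hlen, by simp, ?_⟩
      · exact List.nodup_cons.mpr ⟨hCl, hnd⟩
      · intro X hX
        rcases List.mem_cons.mp hX with h1 | h2
        · subst h1
          exact mem_compF.mpr ⟨hCF, reachF_trans (mem_compF.mp hD).2 hRDC⟩
        · exact hmem X h2

lemma toFinset_LU (l : List (Finset (Fin n))) : l.toFinset.biUnion id = LU l := by
  ext x
  simp [mem_LU]

/-- The key contradiction: a `GoodL` list of length exactly `e` inside `F` violates freeness. -/
lemma no_goodlist (r e : ℕ) (hr : 2 ≤ r) (he : 2 ≤ e) {F : Finset (Finset (Fin n))}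
    (hu : UniformH r F) (hf : IsGFree (e * r - (e - 1)) e F)
    (l : List (Finset (Fin n))) (hg : GoodL l) (hnd : l.Nodup) (hlen : l.length = e)
    (hmem : ∀ B ∈ l, B ∈ F) : False := by
  have hne : l ≠ [] := by
    intro h; subst h; simp at hlen; omega
  have hLU := card_LU r (by omega) l hg (fun B hB => hu B (hmem B hB)) hne
  have hSsub : l.toFinset ⊆ F := fun B hB => hmem B (List.mem_toFinset.mp hB)
  have hScard : l.toFinset.card = e := by rw [List.toFinset_card_of_nodup hnd, hlen]
  have hfree := hf l.toFinset hSsub hScard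
  rw [toFinset_LU] at hfree
  have hXY : e * r = e * (r - 1) + e := by
    calc e * r = e * ((r - 1) + 1) := by rw [Nat.sub_add_cancel (by omega)]
    _ = e * (r - 1) + e := by ring
  rw [hlen] at hLU
  generalize hX : e * r = X at *
  generalize hY : e * (r - 1) = Y at *
  omega


lemma comp_card_le (r e : ℕ) (hr : 2 ≤ r) (he : 2 ≤ e) {F : Finset (Finset (Fin n))}
    (hu : UniformH r F) (hf : IsGFree (e * r - (e - 1)) e F)
    {A : Finset (Fin n)} (hA : A ∈ F) : (compF F A).card ≤ e - 1 := by
  by_contra hcon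
  push_neg at hcon
  obtain ⟨l, hg, hnd, hlen, hne, hmem⟩ := build hA e (by omega) (by omega)
  exact no_goodlist r e hr he hu hf l hg hnd hlen
    (fun B hB => compF_subset F A (hmem B hB))

lemma cyc_sum_le (r e : ℕ) (hr : 2 ≤ r) (he : 2 ≤ e) {F : Finset (Finset (Fin n))}
    (hu : UniformH r F) (hf : IsGFree (e * r - (e - 1)) e F) :
    ∑ C ∈ (F.image (compF F)).filter
        (fun C => (C.biUnion id).card ≤ C.card * (r - 1)), C.card ≤ e - 1 := by
  classical
  set comps := F.image (compF F) with hcomps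
  set 𝒞 := comps.filter (fun C => (C.biUnion id).card ≤ C.card * (r - 1)) with h𝒞
  by_contra hsum
  push_neg at hsum
  have hsum' : e ≤ ∑ C ∈ 𝒞, C.card := by omega
  -- maximal subfamily with sum ≤ e - 1
  set P := 𝒞.powerset.filter (fun S => ∑ C ∈ S, C.card ≤ e - 1) with hP
  have hPne : P.Nonempty := ⟨∅, by simp [hP]⟩
  obtain ⟨𝒮, h𝒮P, hmax⟩ := P.exists_max_image (fun S => ∑ C ∈ S, C.card) hPne
  rw [hP, Finset.mem_filter, Finset.mem_powerset] at h𝒮P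
  obtain ⟨h𝒮sub, h𝒮sum⟩ := h𝒮P
  -- basic facts about comps
  have hrep : ∀ C ∈ comps, ∃ A ∈ F, compF F A = C := fun C hC => Finset.mem_image.mp hC
  have hpos : ∀ C ∈ comps, 1 ≤ C.card := by
    intro C hC
    obtain ⟨A, hA, rfl⟩ := hrep C hC
    exact Finset.card_pos.mpr ⟨A, self_mem_compF hA⟩
  have hdisj : ∀ C ∈ comps, ∀ C' ∈ comps, C ≠ C' → Disjoint C C' := by
    intro C hC C' hC' hne
    obtain ⟨A, hA, rfl⟩ := hrep C hC
    obtain ⟨A', hA', rfl⟩ := hrep C' hC'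
    exact compF_disjoint hne
  have h𝒞comps : 𝒞 ⊆ comps := Finset.filter_subset _ _
  -- there is a component outside 𝒮
  have hss : 𝒮 ⊂ 𝒞 := by
    refine ⟨h𝒮sub, fun hcon => ?_⟩
    have : ∑ C ∈ 𝒞, C.card ≤ ∑ C ∈ 𝒮, C.card := Finset.sum_le_sum_of_subset hcon
    omega
  obtain ⟨C₀, hC₀𝒞, hC₀𝒮⟩ := Finset.exists_of_ssubset hss
  have hC₀pos : 1 ≤ C₀.card := hpos C₀ (h𝒞comps hC₀𝒞)
  -- maximality forces overflow
  have hbig : e ≤ (∑ C ∈ 𝒮, C.card) + C₀.card := by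
    by_contra hcon
    push_neg at hcon
    have hins : insert C₀ 𝒮 ∈ P := by
      rw [hP, Finset.mem_filter, Finset.mem_powerset]
      refine ⟨Finset.insert_subset hC₀𝒞 h𝒮sub, ?_⟩
      rw [Finset.sum_insert hC₀𝒮]
      omega
    have := hmax _ hins
    rw [Finset.sum_insert hC₀𝒮] at this
    omega
  set s := e - ∑ C ∈ 𝒮, C.card with hs
  have hs1 : 1 ≤ s := by omega
  have hs2 : s ≤ C₀.card := by omega
  obtain ⟨A₀, hA₀, hC₀eq⟩ := hrep C₀ (h𝒞comps hC₀𝒞)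
  obtain ⟨l, hg, hnd, hlen, hlne, hlmem⟩ := build hA₀ s hs1 (by rw [hC₀eq]; omega)
  have hlmem' : ∀ B ∈ l, B ∈ C₀ := by rw [← hC₀eq]; exact hlmem
  -- the bad family
  set T := 𝒮.biUnion id ∪ l.toFinset with hT
  have hTsub : T ⊆ F := by
    intro X hX
    rw [hT, Finset.mem_union] at hX
    rcases hX with hX | hX
    · obtain ⟨C, hC, hXC⟩ := Finset.mem_biUnion.mp hX
      obtain ⟨A, hA, rfl⟩ := hrep C (h𝒞comps (h𝒮sub hC))
      exact compF_subset F A hXC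
    · exact compF_subset F A₀ (hlmem X (List.mem_toFinset.mp hX))
  have hdisjT : Disjoint (𝒮.biUnion id) l.toFinset := by
    rw [Finset.disjoint_right]
    intro X hXl hXb
    obtain ⟨C, hC, hXC⟩ := Finset.mem_biUnion.mp hXb
    have hCne : C ≠ C₀ := fun h => hC₀𝒮 (h ▸ hC)
    have := hdisj C (h𝒞comps (h𝒮sub hC)) C₀ (h𝒞comps hC₀𝒞) hCne
    exact (Finset.disjoint_left.mp this hXC) (hlmem' X (List.mem_toFinset.mp hXl))
  have hcb : (𝒮.biUnion id).card = ∑ C ∈ 𝒮, (id C).card :=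
    Finset.card_biUnion (fun C hC C' hC' hne =>
      hdisj C (h𝒞comps (h𝒮sub hC)) C' (h𝒞comps (h𝒮sub hC')) hne)
  simp only [id_eq] at hcb
  have hcardT : T.card = e := by
    rw [hT, Finset.card_union_of_disjoint hdisjT, hcb,
      List.toFinset_card_of_nodup hnd, hlen]
    omega
  -- union size bound
  have hUnion : (T.biUnion id).card ≤ e * (r - 1) + 1 := by
    have hsplit : T.biUnion id = (𝒮.biUnion (fun C => C.biUnion id)) ∪ LU l := by
      have hu1 : T.biUnion id = (𝒮.biUnion id).biUnion id ∪ l.toFinset.biUnion id := by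
        ext x
        simp only [Finset.mem_biUnion, Finset.mem_union, hT]
        constructor
        · rintro ⟨X, hX | hX, hxX⟩
          · exact Or.inl ⟨X, hX, hxX⟩
          · exact Or.inr ⟨X, hX, hxX⟩
        · rintro (⟨X, hX, hxX⟩ | ⟨X, hX, hxX⟩)
          · exact ⟨X, Or.inl hX, hxX⟩
          · exact ⟨X, Or.inr hX, hxX⟩
      rw [hu1, Finset.biUnion_biUnion, toFinset_LU]
      simp only [id_eq]
    rw [hsplit]
    have h1 : ((𝒮.biUnion (fun C => C.biUnion id)).card : ℕ) ≤
        ∑ C ∈ 𝒮, (C.biUnion id).card := Finset.card_biUnion_le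
    have h2 : ∑ C ∈ 𝒮, (C.biUnion id).card ≤ ∑ C ∈ 𝒮, C.card * (r - 1) := by
      refine Finset.sum_le_sum ?_
      intro C hC
      have := h𝒮sub hC
      rw [h𝒞, Finset.mem_filter] at this
      exact this.2
    have h3 : (LU l).card ≤ s * (r - 1) + 1 := by
      have := card_LU r (by omega) l hg
        (fun B hB => hu B (hTsub (Finset.mem_union_right _ (List.mem_toFinset.mpr hB)))) hlne
      rwa [hlen] at this
    have h4 : ∑ C ∈ 𝒮, C.card * (r - 1) = (∑ C ∈ 𝒮, C.card) * (r - 1) :=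
      (Finset.sum_mul ..).symm
    have h5 := Finset.card_union_le (𝒮.biUnion (fun C => C.biUnion id)) (LU l)
    have h6 : (∑ C ∈ 𝒮, C.card) * (r - 1) + (s * (r - 1) + 1) = e * (r - 1) + 1 := by
      have : (∑ C ∈ 𝒮, C.card) + s = e := by omega
      calc (∑ C ∈ 𝒮, C.card) * (r - 1) + (s * (r - 1) + 1)
          = ((∑ C ∈ 𝒮, C.card) + s) * (r - 1) + 1 := by ring
        _ = e * (r - 1) + 1 := by rw [this]
    omega
  -- contradiction with freeness
  have hfree := hf T hTsub hcardT
  have hXY : e * r = e * (r - 1) + e := by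
    calc e * r = e * ((r - 1) + 1) := by rw [Nat.sub_add_cancel (by omega)]
    _ = e * (r - 1) + e := by ring
  generalize hX : e * r = X at *
  generalize hY : e * (r - 1) = Y at *
  omega


lemma main_bound (r e : ℕ) (hr : 2 ≤ r) (he : 2 ≤ e) (F : Finset (Finset (Fin n)))
    (hu : UniformH r F) (hf : IsGFree (e * r - (e - 1)) e F) :
    ((e - 1) * (r - 1) + 1) * F.card ≤ (e - 1) * n + ((e - 1) * (r - 1) + 1) * (e - 1) := by
  classical
  set Q := (e - 1) * (r - 1) + 1 with hQ
  set comps := F.image (compF F) with hcomps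
  have hrep : ∀ C ∈ comps, ∃ A ∈ F, compF F A = C := fun C hC => Finset.mem_image.mp hC
  have hdisj : ∀ C ∈ comps, ∀ C' ∈ comps, C ≠ C' → Disjoint C C' := by
    intro C hC C' hC' hne
    obtain ⟨A, hA, rfl⟩ := hrep C hC
    obtain ⟨A', hA', rfl⟩ := hrep C' hC'
    exact compF_disjoint hne
  have hcover : comps.biUnion id = F := by
    ext A
    simp only [Finset.mem_biUnion, id_eq]
    constructor
    · rintro ⟨C, hC, hAC⟩
      obtain ⟨A', hA', rfl⟩ := hrep C hC
      exact compF_subset F A' hAC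
    · intro hA
      exact ⟨compF F A, Finset.mem_image_of_mem _ hA, self_mem_compF hA⟩
  have hcards : ∑ C ∈ comps, C.card = F.card := by
    have hcb : (comps.biUnion id).card = ∑ C ∈ comps, (id C).card :=
      Finset.card_biUnion hdisj
    simp only [id_eq] at hcb
    rw [← hcb, hcover]
  -- the component of any edge in a component equals the component
  have hcompeq : ∀ C ∈ comps, ∀ A ∈ C, C = compF F A := by
    intro C hC A hA
    obtain ⟨A', hA', rfl⟩ := hrep C hC
    exact compF_eq_of_reach (mem_compF.mp hA).2
  have hvdisj : ∀ C ∈ comps, ∀ C' ∈ comps, C ≠ C' →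
      Disjoint (C.biUnion id) (C'.biUnion id) := by
    intro C hC C' hC' hne
    rw [Finset.disjoint_left]
    intro x hx hx'
    obtain ⟨A, hA, hxA⟩ := Finset.mem_biUnion.mp hx
    obtain ⟨B, hB, hxB⟩ := Finset.mem_biUnion.mp hx'
    have hAF : A ∈ F := by
      obtain ⟨A', hA', rfl⟩ := hrep C hC; exact compF_subset F A' hA
    have hBF : B ∈ F := by
      obtain ⟨B', hB', rfl⟩ := hrep C' hC'; exact compF_subset F B' hB
    have hCC' : C = C' := by
      rcases eq_or_ne A B with rfl | hAB
      · exact absurd (hdisj C hC C' hC' hne) (Finset.not_disjoint_iff.mpr ⟨A, hA, hB⟩)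
      · have hadj : AdjF F A B := ⟨hAF, hBF, hAB, ⟨x, Finset.mem_inter.mpr ⟨hxA, hxB⟩⟩⟩
        have : compF F A = compF F B := compF_eq_of_reach (Relation.ReflTransGen.single hadj)
        rw [hcompeq C hC A hA, hcompeq C' hC' B hB, this]
    exact hne hCC'
  have hvert : ∑ C ∈ comps, (C.biUnion id).card ≤ n := by
    have hcb : (comps.biUnion (fun C => C.biUnion id)).card
        = ∑ C ∈ comps, (C.biUnion id).card := Finset.card_biUnion hvdisj
    rw [← hcb]
    calc (comps.biUnion (fun C => C.biUnion id)).card ≤ Fintype.card (Fin n) :=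
          Finset.card_le_univ _
      _ = n := Fintype.card_fin n
  have hpercomp : ∀ C ∈ comps, C.card ≤ e - 1 := by
    intro C hC
    obtain ⟨A, hA, rfl⟩ := hrep C hC
    exact comp_card_le r e hr he hu hf hA
  set cyc := comps.filter (fun C => (C.biUnion id).card ≤ C.card * (r - 1)) with hcyc
  set tre := comps.filter (fun C => ¬((C.biUnion id).card ≤ C.card * (r - 1))) with htre
  have hsplit : (∑ C ∈ cyc, C.card) + (∑ C ∈ tre, C.card) = F.card := by
    rw [hcyc, htre, Finset.sum_filter_add_sum_filter_not, hcards]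
  have hcycb : ∑ C ∈ cyc, C.card ≤ e - 1 := cyc_sum_le r e hr he hu hf
  have htreeb : ∀ C ∈ tre, Q * C.card ≤ (e - 1) * (C.biUnion id).card := by
    intro C hC
    rw [htre, Finset.mem_filter] at hC
    have h1 : C.card * (r - 1) + 1 ≤ (C.biUnion id).card := by omega
    have h2 : C.card ≤ e - 1 := hpercomp C hC.1
    calc Q * C.card = (e - 1) * (C.card * (r - 1)) + C.card := by rw [hQ]; ring
      _ ≤ (e - 1) * (C.card * (r - 1)) + (e - 1) := by omega
      _ = (e - 1) * (C.card * (r - 1) + 1) := by ring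
      _ ≤ (e - 1) * (C.biUnion id).card := Nat.mul_le_mul_left _ h1
  have htreesum : Q * (∑ C ∈ tre, C.card) ≤ (e - 1) * n := by
    calc Q * (∑ C ∈ tre, C.card) = ∑ C ∈ tre, Q * C.card := Finset.mul_sum ..
      _ ≤ ∑ C ∈ tre, (e - 1) * (C.biUnion id).card := Finset.sum_le_sum htreeb
      _ = (e - 1) * ∑ C ∈ tre, (C.biUnion id).card := (Finset.mul_sum ..).symm
      _ ≤ (e - 1) * ∑ C ∈ comps, (C.biUnion id).card := by
          refine Nat.mul_le_mul_left _ ?_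
          exact Finset.sum_le_sum_of_subset (Finset.filter_subset _ _)
      _ ≤ (e - 1) * n := Nat.mul_le_mul_left _ hvert
  calc Q * F.card = Q * ((∑ C ∈ cyc, C.card) + (∑ C ∈ tre, C.card)) := by rw [hsplit]
    _ = Q * (∑ C ∈ cyc, C.card) + Q * (∑ C ∈ tre, C.card) := by ring
    _ ≤ Q * (e - 1) + (e - 1) * n := add_le_add (Nat.mul_le_mul_left _ hcycb) htreesum
    _ = (e - 1) * n + Q * (e - 1) := by ring


lemma edges_bound (r e : ℕ) (hr : 2 ≤ r) (he : 2 ≤ e) {m : ℕ}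
    (h : ((e - 1) * (r - 1) + 1) * m ≤ (e - 1) * n + ((e - 1) * (r - 1) + 1) * (e - 1))
    (hn : ((e - 1) * (r - 1) + 1) * (e - 1) * (r - 1) < n) : m * (r - 1) < n := by
  set Q := (e - 1) * (r - 1) + 1 with hQ
  have key : Q * (m * (r - 1)) < Q * n := by
    have h2 : Q * m * (r - 1) ≤ ((e - 1) * n + Q * (e - 1)) * (r - 1) :=
      Nat.mul_le_mul_right _ h
    have h3 : ((e - 1) * n + Q * (e - 1)) * (r - 1)
        = (e - 1) * (r - 1) * n + Q * (e - 1) * (r - 1) := by ring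
    calc Q * (m * (r - 1)) = Q * m * (r - 1) := by ring
      _ ≤ (e - 1) * (r - 1) * n + Q * (e - 1) * (r - 1) := by rw [← h3]; exact h2
      _ < (e - 1) * (r - 1) * n + n := by omega
      _ = Q * n := by rw [hQ]; ring
  exact Nat.lt_of_mul_lt_mul_left key

end Stmt8Aux

open Stmt8Aux in
theorem stmt_8 (r e : ℕ) (hr : 2 ≤ r) (he : 2 ≤ e) :
    ∃ N : ℕ, ∀ n : ℕ, N ≤ n →
      (extremalF r n (e * r - (e - 1)) e : ℝ) < (n : ℝ) / ((r : ℝ) - 1) := by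
  refine ⟨((e - 1) * (r - 1) + 1) * (e - 1) * (r - 1) + 1, fun n hn => ?_⟩
  set S := {m | ∃ F : Finset (Finset (Fin n)),
    UniformH r F ∧ IsGFree (e * r - (e - 1)) e F ∧ F.card = m} with hS
  have hne : S.Nonempty := by
    refine ⟨0, ∅, ?_, ?_, rfl⟩
    · intro A hA; simp at hA
    · intro T hT hcard
      have : T = (∅ : Finset (Finset (Fin n))) := Finset.subset_empty.mp hT
      subst this
      simp at hcard
      omega
  have hbdd : BddAbove S := by
    refine ⟨Fintype.card (Finset (Fin n)), ?_⟩
    rintro m ⟨F, _, _, rfl⟩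
    exact Finset.card_le_univ F
  have hmem : sSup S ∈ S := Nat.sSup_mem hne hbdd
  obtain ⟨F, huF, hfF, hcF⟩ := hmem
  have hext : extremalF r n (e * r - (e - 1)) e = F.card := by
    rw [extremalF, ← hS, hcF]
  have hb := main_bound r e hr he F huF hfF
  have hkey : F.card * (r - 1) < n := edges_bound r e hr he hb (by omega)
  have hr1 : (0 : ℝ) < (r : ℝ) - 1 := by
    have : (2 : ℝ) ≤ (r : ℝ) := by exact_mod_cast hr
    linarith
  rw [lt_div_iff₀ hr1, hext]
  have hcast : ((F.card * (r - 1) : ℕ) : ℝ) < (n : ℝ) := by exact_mod_cast hkey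
  rw [Nat.cast_mul, Nat.cast_sub (by omega : 1 ≤ r)] at hcast
  simpa using hcast
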